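/- Let c : Fin 3 × Fin 3 → ZMod n satisfy, for some distinct i, j, k, constraints (i) c i j + c k i + c j k = c j i + c i k + c k j and (ii) c i i + c j k + c k j = c j j + c i k + c k i = c k k + c i j + c j i. Then for every choice of q ∈ ZMod n there exists a unique p : Fin 3 × Fin 3 → ZMod n with p k i = q satisfying all scheme equations: c i i + p j i = c i j + p k j = c i k + p j k; c i i + p k i = c i j + p j j = c i k + p k k; c j i + p k i = c j j + p k j = c j k + p i k; c j i + p i i = c j k + p k k; c j j + p i j = c j k + p j k; c k i + p i i = c k j + p j j = c k k + p i k; c k j + p i j = c k i + p j i; c k i + p k i = c k k + p j k. -/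
import Mathlib


theorem scheme_parameters_unique (n : ℕ) (c : Fin 3 × Fin 3 → ZMod n)
    (i j k : Fin 3) (hij : i ≠ j) (hjk : j ≠ k) (hik : i ≠ k)
    (hi : c (i, j) + c (k, i) + c (j, k) = c (j, i) + c (i, k) + c (k, j))
    (hii1 : c (i, i) + c (j, k) + c (k, j) = c (j, j) + c (i, k) + c (k, i))
    (hii2 : c (j, j) + c (i, k) + c (k, i) = c (k, k) + c (i, j) + c (j, i))
    (q : ZMod n) :
    ∃! p : Fin 3 × Fin 3 → ZMod n,
      p (k, i) = q ∧
      c (i, i) + p (j, i) = c (i, j) + p (k, j) ∧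
      c (i, j) + p (k, j) = c (i, k) + p (j, k) ∧
      c (i, i) + p (k, i) = c (i, j) + p (j, j) ∧
      c (i, j) + p (j, j) = c (i, k) + p (k, k) ∧
      c (j, i) + p (k, i) = c (j, j) + p (k, j) ∧
      c (j, j) + p (k, j) = c (j, k) + p (i, k) ∧
      c (j, i) + p (i, i) = c (j, k) + p (k, k) ∧
      c (j, j) + p (i, j) = c (j, k) + p (j, k) ∧
      c (k, i) + p (i, i) = c (k, j) + p (j, j) ∧
      c (k, j) + p (j, j) = c (k, k) + p (i, k) ∧
      c (k, j) + p (i, j) = c (k, i) + p (j, i) ∧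
      c (k, i) + p (k, i) = c (k, k) + p (j, k) := by
  have hji : j ≠ i := hij.symm
  have hkj : k ≠ j := hjk.symm
  have hki : k ≠ i := hik.symm
  refine ⟨fun x =>
    if x.1 = i then
      (if x.2 = i then c (j,k) + c (i,i) + q - c (i,k) - c (j,i)
       else if x.2 = j then c (j,k) + c (k,i) + q - c (k,k) - c (j,j)
       else c (j,i) + q - c (j,k))
    else if x.1 = j then
      (if x.2 = i then c (i,j) + c (j,i) + q - c (j,j) - c (i,i)
       else if x.2 = j then c (i,i) + q - c (i,j)
       else c (k,i) + q - c (k,k))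
    else
      (if x.2 = i then q
       else if x.2 = j then c (j,i) + q - c (j,j)
       else c (i,i) + q - c (i,k)), ?_, ?_⟩
  · simp only [hij, hjk, hik, hji, hkj, hki, if_true, if_false, if_neg, if_pos, ite_true,
      ite_false]
    refine ⟨by trivial, by ring, by linear_combination -hii2, by ring, by ring, by ring,
      by ring, by ring, by ring, by linear_combination hi, by linear_combination hii1 + hii2,
      by linear_combination hii1 + hii2, by ring⟩
  · rintro p ⟨h1, h2, h3, h4, h5, h6, h7, h8, h9, h10, h11, h12, h13⟩
    have e_jj : p (j, j) = c (i,i) + q - c (i,j) := by linear_combination h1 - h4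
    have e_kk : p (k, k) = c (i,i) + q - c (i,k) := by linear_combination e_jj - h5
    have e_kj : p (k, j) = c (j,i) + q - c (j,j) := by linear_combination h1 - h6
    have e_ik : p (i, k) = c (j,i) + q - c (j,k) := by linear_combination e_kj - h7
    have e_jk : p (j, k) = c (k,i) + q - c (k,k) := by linear_combination h1 - h13
    have e_ii : p (i, i) = c (j,k) + c (i,i) + q - c (i,k) - c (j,i) := by
      linear_combination e_kk + h8
    have e_ij : p (i, j) = c (j,k) + c (k,i) + q - c (k,k) - c (j,j) := by
      linear_combination e_jk + h9
    have e_ji : p (j, i) = c (i,j) + c (j,i) + q - c (j,j) - c (i,i) := by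
      linear_combination e_kj + h2
    funext x
    have key : ∀ (a i j k : Fin 3), i ≠ j → j ≠ k → i ≠ k → (a = i ∨ a = j ∨ a = k) := by
      decide
    have hx1 := key x.1 i j k hij hjk hik
    have hx2 := key x.2 i j k hij hjk hik
    have hx : x = (x.1, x.2) := rfl
    rcases hx1 with h | h | h <;> rcases hx2 with h' | h' | h' <;>
      rw [hx, h, h'] <;>
      simp only [hij, hjk, hik, hji, hkj, hki, if_true, if_false, ite_true, ite_false,
        if_neg, if_pos] <;>
      first
        | exact h1 | exact e_ii | exact e_ij | exact e_ik | exact e_ji | exact e_jj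
        | exact e_jk | exact e_kj | exact e_kk
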